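/- For every v ∈ ℝ, T_3(v) = √(π/2)·(3(2v² + 1)φ(v) − (2v² − 3)v(1 − Φ(v))). -/

import Mathlib

/-- The Hermite polynomials `H_n(x) = (-1)^n e^{x²} (d/dx)^n e^{-x²}`. -/
noncomputable def hermiteH (n : ℕ) (x : ℝ) : ℝ :=
  (-1 : ℝ) ^ n * Real.exp (x ^ 2) * iteratedDeriv n (fun y => Real.exp (-y ^ 2)) x

/-- `I_n(v) = ∫_v^∞ e^{-t²/2} H_n(t) dt`. -/
noncomputable def hermiteI (n : ℕ) (v : ℝ) : ℝ :=
  ∫ t in Set.Ioi v, Real.exp (-t ^ 2 / 2) * hermiteH n t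

/-- The standard Gaussian density `φ`. -/
noncomputable def gaussphi (x : ℝ) : ℝ :=
  (Real.sqrt (2 * Real.pi))⁻¹ * Real.exp (-x ^ 2 / 2)

/-- The standard Gaussian distribution function `Φ`. -/
noncomputable def gaussPhi (x : ℝ) : ℝ :=
  ∫ y in Set.Iic x, gaussphi y

/-- `T_j(v) = (Σ_{k<j} H_k(v)²/(2^k k!)) e^{-v²/2} - (H_j(v)/(2^j (j-1)!)) I_{j-1}(v)`,
for `j ≥ 1`. -/
noncomputable def hermiteT (j : ℕ) (v : ℝ) : ℝ :=
  (∑ k ∈ Finset.range j, (hermiteH k v) ^ 2 / (2 ^ k * (Nat.factorial k : ℝ)))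
      * Real.exp (-v ^ 2 / 2)
    - (hermiteH j v / (2 ^ j * (Nat.factorial (j - 1) : ℝ))) * hermiteI (j - 1) v

open Real MeasureTheory Filter Set Topology

lemma deriv0 : deriv (fun y : ℝ => Real.exp (-y ^ 2)) = fun x => (-2 * x) * Real.exp (-x ^ 2) := by
  funext x
  have h : HasDerivAt (fun y : ℝ => Real.exp (-y ^ 2)) (Real.exp (-x ^ 2) * (-(2 * x))) x := by
    have h1 : HasDerivAt (fun y : ℝ => -y ^ 2) (-(2 * x)) x := by
      have h0 := (hasDerivAt_pow 2 x).neg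
      norm_num at h0
      exact h0
    exact h1.exp
  rw [h.deriv]; ring

lemma deriv1 : deriv (fun x : ℝ => (-2 * x) * Real.exp (-x ^ 2))
    = fun x => (4 * x ^ 2 - 2) * Real.exp (-x ^ 2) := by
  funext x
  have h1 : HasDerivAt (fun y : ℝ => Real.exp (-y ^ 2)) (Real.exp (-x ^ 2) * (-(2 * x))) x := by
    simpa using ((hasDerivAt_pow 2 x).neg).exp
  have h2 : HasDerivAt (fun x : ℝ => (-2 * x)) (-2) x := by
    simpa using (hasDerivAt_id x).const_mul (-2 : ℝ)
  have h := h2.mul h1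
  rw [(show HasDerivAt (fun x : ℝ => (-2 * x) * Real.exp (-x ^ 2)) _ x from h).deriv]; ring

lemma deriv2 : deriv (fun x : ℝ => (4 * x ^ 2 - 2) * Real.exp (-x ^ 2))
    = fun x => (12 * x - 8 * x ^ 3) * Real.exp (-x ^ 2) := by
  funext x
  have h1 : HasDerivAt (fun y : ℝ => Real.exp (-y ^ 2)) (Real.exp (-x ^ 2) * (-(2 * x))) x := by
    simpa using ((hasDerivAt_pow 2 x).neg).exp
  have h2 : HasDerivAt (fun x : ℝ => (4 * x ^ 2 - 2)) (4 * (2 * x)) x := by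
    simpa using (((hasDerivAt_pow 2 x).const_mul (4 : ℝ)).sub_const 2)
  have h := h2.mul h1
  rw [(show HasDerivAt (fun x : ℝ => (4 * x ^ 2 - 2) * Real.exp (-x ^ 2)) _ x from h).deriv]; ring

lemma exp_cancel (x : ℝ) : Real.exp (x ^ 2) * Real.exp (-x ^ 2) = 1 := by
  rw [← Real.exp_add]; simp

lemma hermiteH_zero (x : ℝ) : hermiteH 0 x = 1 := by
  simp [hermiteH, iteratedDeriv_zero, exp_cancel]

lemma hermiteH_one (x : ℝ) : hermiteH 1 x = 2 * x := by
  rw [hermiteH, iteratedDeriv_one, deriv0]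
  linear_combination (2 * x) * exp_cancel x

lemma hermiteH_two (x : ℝ) : hermiteH 2 x = 4 * x ^ 2 - 2 := by
  have : hermiteH 2 x = Real.exp (x ^ 2) * ((4 * x ^ 2 - 2) * Real.exp (-x ^ 2)) := by
    rw [hermiteH, iteratedDeriv_succ, iteratedDeriv_one, deriv0, deriv1]
    ring
  rw [this]
  linear_combination (4 * x ^ 2 - 2) * exp_cancel x

lemma hermiteH_three (x : ℝ) : hermiteH 3 x = 8 * x ^ 3 - 12 * x := by
  have : hermiteH 3 x = (-1) * Real.exp (x ^ 2) * ((12 * x - 8 * x ^ 3) * Real.exp (-x ^ 2)) := by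
    rw [hermiteH, iteratedDeriv_succ, iteratedDeriv_succ, iteratedDeriv_one, deriv0, deriv1,
      deriv2]
    ring
  rw [this]
  linear_combination (8 * x ^ 3 - 12 * x) * exp_cancel x

lemma exp_half_eq (t : ℝ) : Real.exp (-t ^ 2 / 2) = Real.exp (-(1/2 : ℝ) * t ^ 2) := by
  ring_nf

lemma integrable_exp_half : Integrable fun t : ℝ => Real.exp (-t ^ 2 / 2) := by
  simp_rw [exp_half_eq]
  exact integrable_exp_neg_mul_sq (by norm_num)

lemma integrable_sq_exp_half : Integrable fun t : ℝ => t ^ 2 * Real.exp (-t ^ 2 / 2) := by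
  simp_rw [exp_half_eq]
  have := integrable_rpow_mul_exp_neg_mul_sq (b := 1/2) (by norm_num) (s := 2) (by norm_num)
  simpa [Real.rpow_two] using this

lemma integral_exp_half_Ioi (v : ℝ) :
    ∫ t in Set.Ioi v, Real.exp (-t ^ 2 / 2) = Real.sqrt (2 * Real.pi) * (1 - gaussPhi v) := by
  have htot : ∫ t : ℝ, Real.exp (-t ^ 2 / 2) = Real.sqrt (2 * Real.pi) := by
    simp_rw [exp_half_eq]
    rw [integral_gaussian]
    congr 1
    ring
  have hsplit := intervalIntegral.integral_Iic_add_Ioi (μ := volume) (b := v)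
    (f := fun t : ℝ => Real.exp (-t ^ 2 / 2)) integrable_exp_half.integrableOn
    integrable_exp_half.integrableOn
  have hPhi : gaussPhi v = (Real.sqrt (2 * Real.pi))⁻¹ * ∫ t in Set.Iic v, Real.exp (-t ^ 2 / 2) := by
    rw [gaussPhi]
    simp [gaussphi, MeasureTheory.integral_const_mul]
  have hpos : (0 : ℝ) < Real.sqrt (2 * Real.pi) :=
    Real.sqrt_pos.2 (by positivity)
  beta_reduce at hsplit
  rw [hPhi, mul_sub, mul_one, mul_inv_cancel_left₀ hpos.ne']
  linarith [hsplit, htot]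

lemma tendsto_aux : Tendsto (fun x : ℝ => -4 * x * Real.exp (-x ^ 2 / 2)) atTop (𝓝 0) := by
  have h : Tendsto (fun x : ℝ => x * Real.exp (-x ^ 2 / 2)) atTop (𝓝 0) := by
    apply squeeze_zero' (g := fun x : ℝ => x * Real.exp (-x))
    · filter_upwards [eventually_ge_atTop (0 : ℝ)] with x hx
      positivity
    · filter_upwards [eventually_ge_atTop (2 : ℝ)] with x hx
      have h1 : x ≤ x ^ 2 / 2 := by nlinarith
      have h2 := mul_le_mul_of_nonneg_left (Real.exp_le_exp.2 (neg_le_neg h1))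
        (by linarith : (0:ℝ) ≤ x)
      simpa [neg_div] using h2
    · simpa using Real.tendsto_pow_mul_exp_neg_atTop_nhds_zero 1
  have := h.const_mul (-4 : ℝ)
  simpa [mul_assoc] using this

lemma integral_key (v : ℝ) :
    ∫ t in Set.Ioi v, (4 * t ^ 2 - 4) * Real.exp (-t ^ 2 / 2)
      = 4 * v * Real.exp (-v ^ 2 / 2) := by
  have hderiv : ∀ x ∈ Set.Ici v, HasDerivAt (fun t : ℝ => -4 * t * Real.exp (-t ^ 2 / 2))
      ((4 * x ^ 2 - 4) * Real.exp (-x ^ 2 / 2)) x := by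
    intro x _
    have h1 : HasDerivAt (fun t : ℝ => -t ^ 2 / 2) (-x) x := by
      have := ((hasDerivAt_pow 2 x).neg).div_const 2
      simpa using this.congr_deriv (by ring)
    have h2 : HasDerivAt (fun t : ℝ => Real.exp (-t ^ 2 / 2)) (Real.exp (-x ^ 2 / 2) * (-x)) x :=
      h1.exp
    have h3 : HasDerivAt (fun t : ℝ => -4 * t) (-4) x := by
      simpa using (hasDerivAt_id x).const_mul (-4 : ℝ)
    have h := h3.mul h2
    exact h.congr_deriv (by ring)
  have hint : IntegrableOn (fun t : ℝ => (4 * t ^ 2 - 4) * Real.exp (-t ^ 2 / 2)) (Set.Ioi v) := by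
    have : Integrable (fun t : ℝ => (4 * t ^ 2 - 4) * Real.exp (-t ^ 2 / 2)) := by
      have h := (integrable_sq_exp_half.const_mul 4).sub (integrable_exp_half.const_mul 4)
      apply h.congr
      filter_upwards with x
      simp [Pi.sub_apply]
      ring
    exact this.integrableOn
  have := integral_Ioi_of_hasDerivAt_of_tendsto' hderiv hint tendsto_aux
  rw [this]
  ring

lemma hermiteI_two (v : ℝ) : hermiteI 2 v =
    4 * v * Real.exp (-v ^ 2 / 2) + 2 * Real.sqrt (2 * Real.pi) * (1 - gaussPhi v) := by
  have heq : ∀ t : ℝ, Real.exp (-t ^ 2 / 2) * hermiteH 2 t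
      = (4 * t ^ 2 - 4) * Real.exp (-t ^ 2 / 2) + 2 * Real.exp (-t ^ 2 / 2) := by
    intro t; rw [hermiteH_two]; ring
  rw [hermiteI]
  rw [MeasureTheory.setIntegral_congr_fun measurableSet_Ioi (fun t _ => heq t)]
  rw [MeasureTheory.integral_add]
  · rw [integral_key, MeasureTheory.integral_const_mul, integral_exp_half_Ioi]
    ring
  · have : Integrable (fun t : ℝ => (4 * t ^ 2 - 4) * Real.exp (-t ^ 2 / 2)) := by
      have h := (integrable_sq_exp_half.const_mul 4).sub (integrable_exp_half.const_mul 4)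
      apply h.congr; filter_upwards with x; simp [Pi.sub_apply]; ring
    exact this.integrableOn
  · exact (integrable_exp_half.const_mul 2).integrableOn

lemma sqrt_two_pi_eq : Real.sqrt (2 * Real.pi) = 2 * Real.sqrt (Real.pi / 2) := by
  rw [show (2 : ℝ) * Real.pi = 4 * (Real.pi / 2) by ring,
    show (4 : ℝ) = 2 ^ 2 by norm_num,
    Real.sqrt_mul (by positivity), Real.sqrt_sq (by norm_num : (0:ℝ) ≤ 2)]

/-- `T_3(v) = √(π/2)(3(2v² + 1)φ(v) - (2v² - 3)v(1 - Φ(v)))`. -/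
theorem hermiteT_three (v : ℝ) :
    hermiteT 3 v = Real.sqrt (Real.pi / 2) *
      (3 * (2 * v ^ 2 + 1) * gaussphi v - (2 * v ^ 2 - 3) * v * (1 - gaussPhi v)) := by
  have hpos : (0 : ℝ) < Real.sqrt (2 * Real.pi) := Real.sqrt_pos.2 (by positivity)
  rw [hermiteT, Finset.sum_range_succ, Finset.sum_range_succ, Finset.sum_range_one,
    hermiteH_zero, hermiteH_one, hermiteH_two, hermiteH_three, gaussphi]
  show _ - _ * hermiteI 2 v = _
  rw [hermiteI_two, sqrt_two_pi_eq]
  have hq : Real.sqrt (Real.pi / 2) ≠ 0 := by positivity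
  norm_num [Nat.factorial]
  field_simp
  ring
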